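/- Let E be a Hausdorff locally convex topological vector space, Ω ⊂ E a nonempty open set, F ⊂ E a nonempty set, and f : Ω → ℝ. Assume x̂ ∈ Ω maximizes f over Ω ∩ F, that f is Gateaux differentiable at x̂, and that F is weak-admissible at x̂ determined by C. Then: if x̂ ∈ int(F), d_Gf(x̂) = 0; and if x̂ ∈ F \ int(F), then 0 ∈ [d_Gf(x̂), T_C(x̂)], i.e. there exist (λ*, β*) ∈ ℝ₊ × ℝ₊ with (λ*, β*) ≠ (0,0) and x* ∈ T_C(x̂) such that λ* d_Gf(x̂) + β* x* = 0. If moreover 0 ∉ T_C(x̂), one can take λ* = 1. -/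

import Mathlib

open Topology Filter Set

noncomputable section

section Defs

variable {E : Type*} [AddCommGroup E] [Module ℝ E] [TopologicalSpace E]

/-- The canonical map from the topological dual of `E` to the weak-star dual. -/
def toWD (φ : E →L[ℝ] ℝ) : WeakDual ℝ E := φ

/-- The weak-star closed convex hull of a set of continuous linear functionals. -/
def wcch (B : Set (E →L[ℝ] ℝ)) : Set (WeakDual ℝ E) :=
  closure (convexHull ℝ (toWD '' B))

/-- `f` is Gateaux differentiable at `x` with Gateaux-differential `f'`. -/
def HasGateauxAt (f : E → ℝ) (f' : E →L[ℝ] ℝ) (x : E) : Prop :=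
  ∀ v : E, Tendsto (fun t : ℝ => (f (x + t • v) - f x - t * f' v) / t) (𝓝[>] 0) (𝓝 0)

/-- The family `C` is equi-Gateaux differentiable at `x`, with differentials given by `D`. -/
def EquiGateauxAt (C : Set (E → ℝ)) (D : (E → ℝ) → E →L[ℝ] ℝ) (x : E) : Prop :=
  (∀ φ ∈ C, HasGateauxAt φ (D φ) x) ∧
  ∀ v : E, ∀ ε : ℝ, 0 < ε → ∃ δ : ℝ, 0 < δ ∧ ∀ t : ℝ, 0 < t → t < δ →
    ∀ φ ∈ C, |(φ (x + t • v) - φ x - t * (D φ) v) / t| ≤ ε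

/-- The family `C` is equi-lower semicontinuous at `x`. -/
def EquiLscAt (C : Set (E → ℝ)) (x : E) : Prop :=
  ∀ ε : ℝ, 0 < ε → ∃ O ∈ 𝓝 x, ∀ y ∈ O, ∀ φ ∈ C, φ y - φ x > -ε

/-- `[C]^× = {x ∈ E : φ(x) ≥ 0 for all φ ∈ C}`. -/
def polarSet (C : Set (E → ℝ)) : Set E := {x | ∀ φ ∈ C, 0 ≤ φ x}

/-- The multiplier set `T_C(x̂)`. -/
def multSet (C : Set (E → ℝ)) (D : (E → ℝ) → E →L[ℝ] ℝ) (x : E) : Set (WeakDual ℝ E) :=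
  ⋂ n ∈ {n : ℕ | 1 ≤ n}, wcch (D '' {φ | φ ∈ C ∧ φ x ∈ Icc (0:ℝ) (1/(n:ℝ))})

/-- `F` is weak-admissible at `x ∈ F`, determined by `C` (with differentials `D`). -/
def WeakAdmissibleAt (F : Set E) (C : Set (E → ℝ)) (D : (E → ℝ) → E →L[ℝ] ℝ) (x : E) : Prop :=
  x ∈ F ∧ C.Nonempty ∧ F = polarSet C ∧ EquiGateauxAt C D x ∧
    ({φ | φ ∈ C ∧ φ x ≠ 0} = ∅ ∨ EquiLscAt {φ | φ ∈ C ∧ φ x ≠ 0} x) ∧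
    IsCompact (wcch (D '' C))

end Defs

section NormedDefs

variable {Y : Type*} [NormedAddCommGroup Y] [NormedSpace ℝ Y]

/-- `A` is admissible at `x ∈ A`, determined by `C` (with differentials `D`). -/
def AdmissibleAt (A : Set Y) (C : Set (Y → ℝ)) (D : (Y → ℝ) → Y →L[ℝ] ℝ) (x : Y) : Prop :=
  x ∈ A ∧ C.Nonempty ∧ A = polarSet C ∧ EquiGateauxAt C D x ∧
    (∃ r : NNReal, ∃ ε : ℝ, 0 < ε ∧ ∀ φ ∈ C, LipschitzOnWith r φ (Metric.ball x ε)) ∧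
    toWD (0 : Y →L[ℝ] ℝ) ∉ wcch (D '' C)

/-- The recession cone of a set. -/
def recCone (K : Set Y) : Set Y := {v | ∀ l : ℝ, 0 < l → ∀ x ∈ K, x + l • v ∈ K}

/-- The barrier cone of `K`: functionals bounded above on `K`. -/
def barCone (K : Set Y) : Set (Y →L[ℝ] ℝ) := {φ | BddAbove (φ '' K)}

/-- The dual positive cone `A*`. -/
def posDualCone (A : Set Y) : Set (Y →L[ℝ] ℝ) := {φ | ∀ y ∈ A, 0 ≤ φ y}

end NormedDefs

section Aux

variable {E : Type*} [AddCommGroup E] [Module ℝ E] [TopologicalSpace E]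

/-- Every continuous linear functional on the weak-star dual is evaluation at a point. -/
lemma weakdual_dual_eval (ℓ : WeakDual ℝ E →L[ℝ] ℝ) :
    ∃ w : E, ∀ x : WeakDual ℝ E, ℓ x = x w := by
  set B := topDualPairing ℝ E with hB
  have hbasis := (LinearMap.weakBilin_withSeminorms B).hasBasis_zero_ball
  have hcont : ℓ ⁻¹' (Metric.ball (0:ℝ) 1) ∈ 𝓝 (0 : WeakDual ℝ E) := by
    have := ℓ.continuous.tendsto 0
    rw [map_zero] at this
    exact this (Metric.ball_mem_nhds 0 one_pos)
  obtain ⟨⟨s, r⟩, hr, hsub⟩ := hbasis.mem_iff.mp hcont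
  have hker : ∀ x : WeakDual ℝ E, (∀ i ∈ s, x i = 0) → ℓ x = 0 := by
    intro x hx
    by_contra h
    have hx0 : ∀ c : ℝ, |c| * |ℓ x| < 1 := by
      intro c
      have hmem : (c • x : WeakDual ℝ E) ∈ (s.sup B.toSeminormFamily).ball 0 r := by
        show (s.sup B.toSeminormFamily) (c • (show E →L[ℝ] ℝ from x) - 0) < r
        rw [sub_zero]
        refine Seminorm.finset_sup_apply_lt hr ?_
        intro i hi
        have hxi : x i = 0 := hx i hi
        simp only [LinearMap.toSeminormFamily_apply, map_smul, LinearMap.smul_apply]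
        show ‖c • x i‖ < r
        rw [hxi]
        simpa using hr
      have := hsub hmem
      change ℓ (c • x) ∈ Metric.ball (0:ℝ) 1 at this
      simp only [mem_preimage, Metric.mem_ball, dist_zero_right] at this
      rw [map_smul] at this
      simpa [abs_mul] using this
    have hlx : 0 < |ℓ x| := abs_pos.mpr h
    have := hx0 (1 / |ℓ x|)
    rw [abs_of_nonneg (by positivity), one_div, inv_mul_cancel₀ (ne_of_gt hlx)] at this
    exact lt_irrefl 1 this
  haveI : Finite {y : E // y ∈ s} := FinsetCoe.fintype s |>.finite
  set L : {y : E // y ∈ s} → (WeakDual ℝ E) →ₗ[ℝ] ℝ := fun i => B.flip (i : E) with hL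
  have hle : (⨅ i, LinearMap.ker (L i)) ≤ LinearMap.ker (ℓ : WeakDual ℝ E →ₗ[ℝ] ℝ) := by
    intro x hx
    simp only [Submodule.mem_iInf, LinearMap.mem_ker] at hx ⊢
    exact hker x fun i hi => hx ⟨i, hi⟩
  obtain ⟨c, hc⟩ := Submodule.mem_span_range_iff_exists_fun ℝ |>.mp (mem_span_of_iInf_ker_le_ker hle)
  refine ⟨∑ i : {y : E // y ∈ s}, c i • (i : E), fun x => ?_⟩
  have := LinearMap.congr_fun hc x
  simp only [LinearMap.coe_sum, Finset.sum_apply, LinearMap.smul_apply] at this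
  have h2 : ℓ x = ∑ i : {y : E // y ∈ s}, c i • (L i) x := this.symm
  rw [h2, map_sum]
  refine Finset.sum_congr rfl fun i _ => ?_
  rw [map_smul]
  rfl

variable [IsTopologicalAddGroup E] [ContinuousSMul ℝ E]

lemma tendsto_line (xh v : E) : Tendsto (fun t : ℝ => xh + t • v) (𝓝 0) (𝓝 xh) := by
  have hc : Continuous fun t : ℝ => xh + t • v :=
    continuous_const.add (continuous_id.smul continuous_const)
  have h := hc.tendsto 0
  simpa using h

lemma gateaux_nonpos {f : E → ℝ} {f' : E →L[ℝ] ℝ} {xh : E}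
    (hf : HasGateauxAt f f' xh) {v : E}
    (h : ∀ᶠ t in 𝓝[>] (0:ℝ), f (xh + t • v) ≤ f xh) : f' v ≤ 0 := by
  have hlim := hf v
  have hev : ∀ᶠ t in 𝓝[>] (0:ℝ), (f (xh + t • v) - f xh - t * f' v) / t ≤ -f' v := by
    filter_upwards [h, self_mem_nhdsWithin] with t ht ht0
    have ht0' : (0:ℝ) < t := ht0
    rw [div_le_iff₀ ht0']
    nlinarith
  have := le_of_tendsto hlim hev
  linarith

end Aux

set_option maxHeartbeats 1000000 in
/-- (Main Lagrange multiplier rule, inequality constraints.) If `xh ∈ Ω`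
maximizes `f` over `Ω ∩ F`, `f` is Gateaux differentiable at `xh` and `F` is weak-admissible
at `xh` determined by `C`, then: if `xh ∈ int(F)` then `d_Gf(xh) = 0`; if `xh ∈ F \ int(F)`
then there exist `(λ*, β*) ∈ ℝ₊ × ℝ₊`, `(λ*, β*) ≠ (0,0)`, and `x* ∈ T_C(xh)` with
`λ* d_Gf(xh) + β* x* = 0`; and if moreover `0 ∉ T_C(xh)` one can take `λ* = 1`. -/
theorem lagrange_multiplier_rule
    {E : Type*} [AddCommGroup E] [Module ℝ E] [TopologicalSpace E]
    [IsTopologicalAddGroup E] [ContinuousSMul ℝ E] [LocallyConvexSpace ℝ E] [T2Space E]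
    (Ω : Set E) (hΩ : IsOpen Ω) (hΩne : Ω.Nonempty)
    (F : Set E) (hFne : F.Nonempty)
    (f : E → ℝ) (f' : E →L[ℝ] ℝ) (C : Set (E → ℝ)) (D : (E → ℝ) → E →L[ℝ] ℝ) (xh : E)
    (hxΩ : xh ∈ Ω) (hxF : xh ∈ F)
    (hmax : ∀ x ∈ Ω ∩ F, f x ≤ f xh)
    (hf : HasGateauxAt f f' xh)
    (hadm : WeakAdmissibleAt F C D xh) :
    (xh ∈ interior F → f' = 0) ∧
    (xh ∉ interior F →
      ∃ l b : ℝ, 0 ≤ l ∧ 0 ≤ b ∧ (l, b) ≠ (0, 0) ∧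
        ∃ xs ∈ multSet C D xh, l • toWD f' + b • xs = 0) ∧
    (xh ∉ interior F → toWD (0 : E →L[ℝ] ℝ) ∉ multSet C D xh →
      ∃ b : ℝ, 0 ≤ b ∧ ∃ xs ∈ multSet C D xh, toWD f' + b • xs = 0) := by
  obtain ⟨hxF', hCne, hFpol, hequi, hlsc, hcpt⟩ := hadm
  have hxpol : ∀ φ ∈ C, 0 ≤ φ xh := by rw [hFpol] at hxF; exact hxF
  set K : ℕ → Set (WeakDual ℝ E) :=
    fun n => wcch (D '' {φ | φ ∈ C ∧ φ xh ∈ Icc (0:ℝ) (1/(n:ℝ))}) with hKdef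
  have hKmono : ∀ m n : ℕ, 1 ≤ m → m ≤ n → K n ⊆ K m := by
    intro m n hm hmn
    have hsub : {φ | φ ∈ C ∧ φ xh ∈ Icc (0:ℝ) (1/(n:ℝ))}
        ⊆ {φ | φ ∈ C ∧ φ xh ∈ Icc (0:ℝ) (1/(m:ℝ))} := by
      rintro φ ⟨hφC, hI⟩
      rw [mem_Icc] at hI
      refine ⟨hφC, mem_Icc.mpr ⟨hI.1, hI.2.trans (one_div_le_one_div_of_le ?_ ?_)⟩⟩
      · exact_mod_cast hm
      · exact_mod_cast hmn
    exact closure_mono (convexHull_mono (image_mono (image_mono hsub)))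
  have hKsubC : ∀ n, K n ⊆ wcch (D '' C) := fun n =>
    closure_mono (convexHull_mono (image_mono (image_mono fun φ hφ => hφ.1)))
  have hKcpt : ∀ n, IsCompact (K n) := fun n =>
    hcpt.of_isClosed_subset isClosed_closure (hKsubC n)
  have hKcl : ∀ n, IsClosed (K n) := fun n => isClosed_closure
  have hKconv : ∀ n, Convex ℝ (K n) := fun n => (convex_convexHull ℝ _).closure
  have hmultK : multSet C D xh = ⋂ n : ℕ, K (n+1) := by
    ext x
    simp only [multSet, mem_iInter, mem_setOf_eq]
    constructor
    · intro h n
      exact h (n+1) (by omega)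
    · intro h n hn
      obtain ⟨p, rfl⟩ : ∃ p, n = p + 1 := ⟨n - 1, by omega⟩
      exact h p
  have hCne' : xh ∉ interior F →
      ∀ n : ℕ, {φ | φ ∈ C ∧ φ xh ∈ Icc (0:ℝ) (1/((n+1:ℕ):ℝ))}.Nonempty := by
    intro hnint n
    by_contra hemp
    rw [Set.not_nonempty_iff_eq_empty] at hemp
    have hpos : (0:ℝ) < 1/((n+1:ℕ):ℝ) := by positivity
    have hgt : ∀ φ ∈ C, 1/((n+1:ℕ):ℝ) < φ xh := by
      intro φ hφ
      by_contra hle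
      push_neg at hle
      exact Set.eq_empty_iff_forall_notMem.mp hemp φ ⟨hφ, mem_Icc.mpr ⟨hxpol φ hφ, hle⟩⟩
    have hSC : {φ | φ ∈ C ∧ φ xh ≠ 0} = C := by
      ext φ
      exact ⟨fun h => h.1, fun h => ⟨h, ne_of_gt (lt_trans hpos (hgt φ h))⟩⟩
    rcases hlsc with hS | hS
    · obtain ⟨φ₀, hφ₀⟩ := hCne
      have h0 : φ₀ ∈ {φ | φ ∈ C ∧ φ xh ≠ 0} := by rw [hSC]; exact hφ₀
      rw [hS] at h0
      exact h0
    · obtain ⟨O, hO, hOlt⟩ := hS (1/((n+1:ℕ):ℝ)) hpos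
      have hOF : O ⊆ F := by
        intro y hy
        rw [hFpol]
        intro φ hφ
        have h1 := hOlt y hy φ (by rw [hSC]; exact hφ)
        have h2 := hgt φ hφ
        linarith
      exact hnint (mem_interior_iff_mem_nhds.mpr (mem_of_superset hO hOF))
  have hKne : xh ∉ interior F → ∀ n : ℕ, (K (n+1)).Nonempty := by
    intro hnint n
    obtain ⟨φ, hφ⟩ := hCne' hnint n
    exact ⟨toWD (D φ), subset_closure (subset_convexHull ℝ _ ⟨D φ, ⟨φ, hφ, rfl⟩, rfl⟩)⟩
  -- Part 1
  have part1 : xh ∈ interior F → f' = 0 := by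
    intro hint
    have hdir : ∀ v : E, f' v ≤ 0 := by
      intro v
      apply gateaux_nonpos hf
      have hev : ∀ᶠ t in 𝓝 (0:ℝ), xh + t • v ∈ Ω ∩ interior F :=
        (tendsto_line xh v).eventually_mem ((hΩ.inter isOpen_interior).mem_nhds ⟨hxΩ, hint⟩)
      filter_upwards [hev.filter_mono nhdsWithin_le_nhds] with t ht
      exact hmax _ ⟨ht.1, interior_subset ht.2⟩
    ext v
    have h1 := hdir v
    have h2 := hdir (-v)
    rw [map_neg] at h2
    simp only [ContinuousLinearMap.zero_apply]
    linarith
  -- Feasible directions give nonpositive derivative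
  have hfeas : ∀ (v : E) (n : ℕ) (σ : ℝ), 0 < σ →
      (∀ φ ∈ C, φ xh ≤ 1/((n+1:ℕ):ℝ) → σ ≤ D φ v) → f' v ≤ 0 := by
    intro v n σ hσ hnear
    obtain ⟨m, hm⟩ := (hcpt.image (WeakDual.eval_continuous v)).bddBelow
    have hmemC : ∀ φ ∈ C, toWD (D φ) ∈ wcch (D '' C) := fun φ hφ =>
      subset_closure (subset_convexHull ℝ _ ⟨D φ, ⟨φ, hφ, rfl⟩, rfl⟩)
    have hlow : ∀ φ ∈ C, m ≤ D φ v := fun φ hφ => hm ⟨toWD (D φ), hmemC φ hφ, rfl⟩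
    set M : ℝ := max (-m) 0 with hM
    have hM0 : 0 ≤ M := le_max_right _ _
    have hlow' : ∀ φ ∈ C, -M ≤ D φ v := by
      intro φ hφ
      have h1 := hlow φ hφ
      have h2 : -m ≤ M := le_max_left _ _
      linarith
    obtain ⟨δ, hδpos, hδ⟩ := hequi.2 v σ hσ
    have hcpos : (0:ℝ) < 1/((n+1:ℕ):ℝ) := by positivity
    have hMσ : (0:ℝ) < M + σ := by linarith
    set t₀ : ℝ := (1/((n+1:ℕ):ℝ))/(M+σ) with ht₀def
    have ht₀pos : 0 < t₀ := div_pos hcpos hMσ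
    apply gateaux_nonpos hf
    have hΩev : ∀ᶠ t in 𝓝[>] (0:ℝ), xh + t • v ∈ Ω :=
      ((tendsto_line xh v).eventually_mem (hΩ.mem_nhds hxΩ)).filter_mono nhdsWithin_le_nhds
    have hIoo : Ioo (0:ℝ) (min δ t₀) ∈ 𝓝[>] (0:ℝ) :=
      Ioo_mem_nhdsGT_of_mem ⟨le_refl 0, lt_min hδpos ht₀pos⟩
    filter_upwards [hΩev, hIoo] with t htΩ ht
    apply hmax
    refine ⟨htΩ, ?_⟩
    rw [hFpol]
    intro φ hφ
    have hq := (abs_le.mp (hδ t ht.1 (lt_of_lt_of_le ht.2 (min_le_left _ _)) φ hφ)).1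
    have ha : -σ * t ≤ φ (xh + t • v) - φ xh - t * D φ v := by
      have := (le_div_iff₀ ht.1).mp hq
      linarith
    by_cases hcase : φ xh ≤ 1/((n+1:ℕ):ℝ)
    · have h1 := hnear φ hφ hcase
      have h2 := hxpol φ hφ
      nlinarith [ht.1.le]
    · push_neg at hcase
      have h3 := hlow' φ hφ
      have ht₀' : t < t₀ := lt_of_lt_of_le ht.2 (min_le_right _ _)
      have h4 : t * (M + σ) < 1/((n+1:ℕ):ℝ) := by
        rw [ht₀def] at ht₀'
        exact (lt_div_iff₀ hMσ).mp ht₀'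
      nlinarith [ht.1.le]
  -- Part 3
  have part3 : xh ∉ interior F → toWD (0 : E →L[ℝ] ℝ) ∉ multSet C D xh →
      ∃ b : ℝ, 0 ≤ b ∧ ∃ xs ∈ multSet C D xh, toWD f' + b • xs = 0 := by
    intro hnint h0T
    have hTiK : multSet C D xh = ⋂ n : ℕ, K (n+1) := hmultK
    set T := multSet C D xh with hTdef
    have hTsub : T ⊆ K 1 := by rw [hTiK]; exact iInter_subset _ 0
    have hTcl : IsClosed T := by rw [hTiK]; exact isClosed_iInter fun n => hKcl (n+1)
    have hTcpt : IsCompact T := (hKcpt 1).of_isClosed_subset hTcl hTsub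
    have hTconv : Convex ℝ T := by rw [hTiK]; exact convex_iInter fun n => hKconv (n+1)
    have hTne : T.Nonempty := by
      rw [hTiK]
      exact IsCompact.nonempty_iInter_of_sequence_nonempty_isCompact_isClosed _
        (fun n => hKmono (n+1) (n+2) (by omega) (by omega)) (hKne hnint) (hKcpt 1)
        (fun n => hKcl (n+1))
    obtain ⟨q₀, hq₀⟩ := hTne
    by_contra hcon
    push_neg at hcon
    set Q : Set (WeakDual ℝ E) :=
      (fun p : ℝ × WeakDual ℝ E => p.1 • toWD f' + (1 - p.1) • p.2) '' ((Icc (0:ℝ) 1) ×ˢ T)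
      with hQdef
    have h0Q : (0 : WeakDual ℝ E) ∉ Q := by
      rintro ⟨⟨l, q⟩, hmem, heq⟩
      have hl0 : (0:ℝ) ≤ l := hmem.1.1
      have hl1 : l ≤ 1 := hmem.1.2
      have hqT : q ∈ T := hmem.2
      have heq' : l • toWD f' + (1 - l) • q = 0 := heq
      rcases eq_or_lt_of_le hl0 with hl | hl
      · rw [← hl] at heq'
        simp only [zero_smul, zero_add, sub_zero, one_smul] at heq'
        exact h0T (by rw [heq'] at hqT; exact hqT)
      · have hb : 0 ≤ (1 - l)/l := div_nonneg (by linarith) hl.le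
        apply hcon ((1-l)/l) hb q hqT
        have hkey : l⁻¹ • (l • toWD f' + (1 - l) • q) = toWD f' + ((1-l)/l) • q := by
          rw [smul_add, smul_smul, smul_smul, inv_mul_cancel₀ (ne_of_gt hl), one_smul,
            div_eq_inv_mul]
        rw [← hkey, heq', smul_zero]
    have hQcpt : IsCompact Q := by
      apply (isCompact_Icc.prod hTcpt).image
      exact (continuous_fst.smul continuous_const).add
        ((continuous_const.sub continuous_fst).smul continuous_snd)
    have hQconv : Convex ℝ Q := by
      rintro p₁ ⟨⟨l₁, q₁⟩, hmem₁, rfl⟩ p₂ ⟨⟨l₂, q₂⟩, hmem₂, rfl⟩ a b ha hb hab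
      have hl₁0 : (0:ℝ) ≤ l₁ := hmem₁.1.1
      have hl₁1 : l₁ ≤ 1 := hmem₁.1.2
      have hq₁ : q₁ ∈ T := hmem₁.2
      have hl₂0 : (0:ℝ) ≤ l₂ := hmem₂.1.1
      have hl₂1 : l₂ ≤ 1 := hmem₂.1.2
      have hq₂ : q₂ ∈ T := hmem₂.2
      have hl0 : 0 ≤ a * l₁ + b * l₂ := by positivity
      have hl1 : a * l₁ + b * l₂ ≤ 1 := by nlinarith
      have hm1 : 0 ≤ a * (1 - l₁) := mul_nonneg ha (by linarith)
      have hm2 : 0 ≤ b * (1 - l₂) := mul_nonneg hb (by linarith)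
      have hmeq : a * (1 - l₁) + b * (1 - l₂) = 1 - (a * l₁ + b * l₂) := by linarith
      rcases eq_or_lt_of_le (by linarith : (0:ℝ) ≤ a * (1 - l₁) + b * (1 - l₂)) with hm' | hm'
      · have hz1 : a * (1 - l₁) = 0 := by linarith
        have hz2 : b * (1 - l₂) = 0 := by linarith
        have hls : a * l₁ + b * l₂ = 1 := by linarith
        refine ⟨(1, q₀), ⟨⟨zero_le_one, le_refl 1⟩, hq₀⟩, ?_⟩
        refine DFunLike.ext _ _ fun y => ?_
        show (1:ℝ) * f' y + (1 - 1) * q₀ y =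
          a * (l₁ * f' y + (1 - l₁) * q₁ y) + b * (l₂ * f' y + (1 - l₂) * q₂ y)
        linear_combination (- f' y) * hls + (- q₁ y) * hz1 + (- q₂ y) * hz2
      · set m := a * (1 - l₁) + b * (1 - l₂) with hmdef
        have hmne : m ≠ 0 := ne_of_gt hm'
        have hcsum : a * (1 - l₁) / m + b * (1 - l₂) / m = 1 := by
          rw [← add_div, div_self hmne]
        have hq : (a * (1 - l₁) / m) • q₁ + (b * (1 - l₂) / m) • q₂ ∈ T :=
          hTconv hq₁ hq₂ (div_nonneg hm1 hm'.le) (div_nonneg hm2 hm'.le) hcsum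
        refine ⟨(a * l₁ + b * l₂, (a * (1 - l₁) / m) • q₁ + (b * (1 - l₂) / m) • q₂),
          ⟨⟨hl0, hl1⟩, hq⟩, ?_⟩
        refine DFunLike.ext _ _ fun y => ?_
        show (a * l₁ + b * l₂) * f' y +
            (1 - (a * l₁ + b * l₂)) * ((a * (1 - l₁) / m) * q₁ y + (b * (1 - l₂) / m) * q₂ y) =
          a * (l₁ * f' y + (1 - l₁) * q₁ y) + b * (l₂ * f' y + (1 - l₂) * q₂ y)
        rw [← hmeq]
        field_simp
        ring
    haveI : LocallyConvexSpace ℝ (WeakDual ℝ E) :=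
      WeakBilin.locallyConvexSpace (B := topDualPairing ℝ E)
    obtain ⟨g, u, u', h1, h2, h3⟩ := geometric_hahn_banach_compact_closed
      (convex_singleton (0 : WeakDual ℝ E)) isCompact_singleton hQconv hQcpt.isClosed
      (disjoint_singleton_left.mpr h0Q)
    have hu : 0 < u := by have := h1 0 rfl; simpa using this
    obtain ⟨w, hw⟩ := weakdual_dual_eval g
    have hf'Q : toWD f' ∈ Q := by
      refine ⟨(1, q₀), ⟨⟨zero_le_one, le_refl 1⟩, hq₀⟩, ?_⟩
      show (1:ℝ) • toWD f' + (1 - 1) • q₀ = toWD f'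
      simp
    have hf'w : u' < f' w := by
      have := h3 _ hf'Q
      rwa [hw] at this
    have hTw : ∀ q ∈ T, u < q w := by
      intro q hq
      have hqQ : q ∈ Q := by
        refine ⟨(0, q), ⟨⟨le_refl 0, zero_le_one⟩, hq⟩, ?_⟩
        show (0:ℝ) • toWD f' + (1 - 0) • q = q
        simp
      have h4 := h3 q hqQ
      rw [hw] at h4
      linarith
    have hAcl : IsClosed {x : WeakDual ℝ E | x w ≤ u} :=
      isClosed_le (WeakDual.eval_continuous w) continuous_const
    have hnotall : ¬ ∀ p : ℕ, (K (p+1) ∩ {x : WeakDual ℝ E | x w ≤ u}).Nonempty := by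
      intro hall
      obtain ⟨x, hx⟩ := IsCompact.nonempty_iInter_of_sequence_nonempty_isCompact_isClosed
        (fun p => K (p+1) ∩ {x : WeakDual ℝ E | x w ≤ u})
        (fun p => inter_subset_inter_left _ (hKmono (p+1) (p+2) (by omega) (by omega)))
        hall ((hKcpt 1).inter_right hAcl) (fun p => (hKcl (p+1)).inter hAcl)
      rw [mem_iInter] at hx
      have hxT : x ∈ T := by
        rw [hTiK, mem_iInter]
        exact fun p => (hx p).1
      exact absurd (hTw x hxT) (not_lt.mpr (hx 0).2)
    push_neg at hnotall
    obtain ⟨p, hp⟩ := hnotall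
    have hKey : ∀ φ ∈ C, φ xh ≤ 1/((p+1:ℕ):ℝ) → u ≤ D φ w := by
      intro φ hφ hle
      have hmemK : toWD (D φ) ∈ K (p+1) :=
        subset_closure (subset_convexHull ℝ _
          ⟨D φ, ⟨φ, ⟨hφ, mem_Icc.mpr ⟨hxpol φ hφ, hle⟩⟩, rfl⟩, rfl⟩)
      by_contra hlt
      push_neg at hlt
      have hmem2 : toWD (D φ) ∈ K (p+1) ∩ {x : WeakDual ℝ E | x w ≤ u} := ⟨hmemK, hlt.le⟩
      rw [hp] at hmem2
      exact hmem2
    have := hfeas w p u hu hKey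
    linarith
  refine ⟨part1, ?_, part3⟩
  intro hnint
  by_cases h0 : toWD (0 : E →L[ℝ] ℝ) ∈ multSet C D xh
  · refine ⟨0, 1, le_refl 0, zero_le_one, by simp, toWD 0, h0, ?_⟩
    show (0:ℝ) • toWD f' + (1:ℝ) • toWD (0 : E →L[ℝ] ℝ) = 0
    rw [zero_smul, one_smul, zero_add]
    rfl
  · obtain ⟨b, hb, xs, hxs, heq⟩ := part3 hnint h0
    exact ⟨1, b, zero_le_one, hb, by simp, xs, hxs, by rw [one_smul]; exact heq⟩
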